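/- Let v₁ = (1,0), v₂ = (a,b), v₃ = (p,q) be vectors in ℝ². Then the signature of the Maslov matrix θ(v₁,v₂,v₃) is 1 if b·q·(a·q − b·p) < 0, is −1 if b·q·(a·q − b·p) > 0, and is 0 if b·q·(a·q − b·p) = 0. -/

import Mathlib

open Matrix

/-- The standard symplectic form on `ℝ²`. -/
def omegaForm (u v : ℝ × ℝ) : ℝ := u.1 * v.2 - u.2 * v.1

/-- The signature of a real `3 × 3` matrix: the number of positive eigenvalues minus
the number of negative eigenvalues (defined to be `0` if the matrix is not symmetric). -/
noncomputable def matSignature (A : Matrix (Fin 3) (Fin 3) ℝ) : ℤ :=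
  if h : A.IsHermitian then
    ((Finset.univ.filter (fun i => 0 < h.eigenvalues i)).card : ℤ)
      - ((Finset.univ.filter (fun i => h.eigenvalues i < 0)).card : ℤ)
  else 0

/-- The Maslov matrix `θ(v₁, v₂, v₃)`. -/
def maslovMatrix (v₁ v₂ v₃ : ℝ × ℝ) : Matrix (Fin 3) (Fin 3) ℝ :=
  !![0, -omegaForm v₁ v₂, omegaForm v₁ v₃;
     -omegaForm v₁ v₂, 0, -omegaForm v₂ v₃;
     omegaForm v₁ v₃, -omegaForm v₂ v₃, 0]

lemma trace_eq_sum_eig {A : Matrix (Fin 3) (Fin 3) ℝ} (hA : A.IsHermitian) :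
    A.trace = ∑ i, hA.eigenvalues i := by
  conv_lhs => rw [hA.spectral_theorem]
  rw [Unitary.conjStarAlgAut_apply, Matrix.trace_mul_cycle]
  simp [Matrix.trace_diagonal, Matrix.mem_unitaryGroup_iff']

lemma card_filter_fin3 (P : Fin 3 → Prop) [DecidablePred P] :
    ((Finset.univ.filter P).card : ℤ)
      = (if P 0 then 1 else 0) + (if P 1 then 1 else 0) + (if P 2 then 1 else 0) := by
  rw [Finset.card_filter, Fin.sum_univ_three]
  push_cast [apply_ite (Nat.cast : ℕ → ℤ)]
  rfl

lemma sig_aux (x y z : ℝ) (hs : x + y + z = 0) :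
    (x * y * z < 0 →
      ((if 0 < x then (1:ℤ) else 0) + (if 0 < y then 1 else 0) + (if 0 < z then 1 else 0))
        - ((if x < 0 then (1:ℤ) else 0) + (if y < 0 then 1 else 0) + (if z < 0 then 1 else 0)) = 1) ∧
    (0 < x * y * z →
      ((if 0 < x then (1:ℤ) else 0) + (if 0 < y then 1 else 0) + (if 0 < z then 1 else 0))
        - ((if x < 0 then (1:ℤ) else 0) + (if y < 0 then 1 else 0) + (if z < 0 then 1 else 0)) = -1) ∧
    (x * y * z = 0 →
      ((if 0 < x then (1:ℤ) else 0) + (if 0 < y then 1 else 0) + (if 0 < z then 1 else 0))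
        - ((if x < 0 then (1:ℤ) else 0) + (if y < 0 then 1 else 0) + (if z < 0 then 1 else 0)) = 0) := by
  rcases lt_trichotomy x 0 with hx | hx | hx <;>
    rcases lt_trichotomy y 0 with hy | hy | hy <;>
      rcases lt_trichotomy z 0 with hz | hz | hz
  · refine ⟨fun h => ?_, fun h => ?_, fun h => ?_⟩
    · exfalso; linarith
    · exfalso; linarith
    · exfalso; linarith
  · subst hz
    refine ⟨fun h => ?_, fun h => ?_, fun h => ?_⟩
    · exfalso; linarith
    · exfalso; linarith
    · exfalso; linarith
  · refine ⟨fun h => ?_, fun h => ?_, fun h => ?_⟩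
    · exfalso; nlinarith [mul_pos (neg_pos.mpr hx) (neg_pos.mpr hy), mul_pos hz (neg_pos.mpr hx), mul_pos hz (neg_pos.mpr hy)]
    · rw [if_neg (lt_asymm hx), if_pos hx, if_neg (lt_asymm hy), if_pos hy, if_pos hz, if_neg (lt_asymm hz)]; norm_num
    · exfalso; nlinarith [mul_pos (neg_pos.mpr hx) (neg_pos.mpr hy), mul_pos hz (neg_pos.mpr hx), mul_pos hz (neg_pos.mpr hy)]
  · subst hy
    refine ⟨fun h => ?_, fun h => ?_, fun h => ?_⟩
    · exfalso; linarith
    · exfalso; linarith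
    · exfalso; linarith
  · subst hy
    subst hz
    refine ⟨fun h => ?_, fun h => ?_, fun h => ?_⟩
    · exfalso; linarith
    · exfalso; linarith
    · exfalso; linarith
  · subst hy
    refine ⟨fun h => ?_, fun h => ?_, fun h => ?_⟩
    · exfalso; nlinarith [mul_pos hz (neg_pos.mpr hx)]
    · exfalso; nlinarith [mul_pos hz (neg_pos.mpr hx)]
    · rw [if_neg (lt_asymm hx), if_pos hx, if_pos hz, if_neg (lt_asymm hz)]; norm_num
  · refine ⟨fun h => ?_, fun h => ?_, fun h => ?_⟩
    · exfalso; nlinarith [mul_pos (neg_pos.mpr hx) (neg_pos.mpr hz), mul_pos hy (neg_pos.mpr hx), mul_pos hy (neg_pos.mpr hz)]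
    · rw [if_neg (lt_asymm hx), if_pos hx, if_pos hy, if_neg (lt_asymm hy), if_neg (lt_asymm hz), if_pos hz]; norm_num
    · exfalso; nlinarith [mul_pos (neg_pos.mpr hx) (neg_pos.mpr hz), mul_pos hy (neg_pos.mpr hx), mul_pos hy (neg_pos.mpr hz)]
  · subst hz
    refine ⟨fun h => ?_, fun h => ?_, fun h => ?_⟩
    · exfalso; nlinarith [mul_pos hy (neg_pos.mpr hx)]
    · exfalso; nlinarith [mul_pos hy (neg_pos.mpr hx)]
    · rw [if_neg (lt_asymm hx), if_pos hx, if_pos hy, if_neg (lt_asymm hy)]; norm_num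
  · refine ⟨fun h => ?_, fun h => ?_, fun h => ?_⟩
    · rw [if_neg (lt_asymm hx), if_pos hx, if_pos hy, if_neg (lt_asymm hy), if_pos hz, if_neg (lt_asymm hz)]; norm_num
    · exfalso; nlinarith [mul_pos hy hz, mul_pos hy (neg_pos.mpr hx), mul_pos hz (neg_pos.mpr hx)]
    · exfalso; nlinarith [mul_pos hy hz, mul_pos hy (neg_pos.mpr hx), mul_pos hz (neg_pos.mpr hx)]
  · subst hx
    refine ⟨fun h => ?_, fun h => ?_, fun h => ?_⟩
    · exfalso; linarith
    · exfalso; linarith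
    · exfalso; linarith
  · subst hx
    subst hz
    refine ⟨fun h => ?_, fun h => ?_, fun h => ?_⟩
    · exfalso; linarith
    · exfalso; linarith
    · exfalso; linarith
  · subst hx
    refine ⟨fun h => ?_, fun h => ?_, fun h => ?_⟩
    · exfalso; nlinarith [mul_pos hz (neg_pos.mpr hy)]
    · exfalso; nlinarith [mul_pos hz (neg_pos.mpr hy)]
    · rw [if_neg (lt_asymm hy), if_pos hy, if_pos hz, if_neg (lt_asymm hz)]; norm_num
  · subst hx
    subst hy
    refine ⟨fun h => ?_, fun h => ?_, fun h => ?_⟩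
    · exfalso; linarith
    · exfalso; linarith
    · exfalso; linarith
  · subst hx
    subst hy
    subst hz
    refine ⟨fun h => ?_, fun h => ?_, fun h => ?_⟩
    · exfalso; nlinarith []
    · exfalso; nlinarith []
    · norm_num
  · subst hx
    subst hy
    refine ⟨fun h => ?_, fun h => ?_, fun h => ?_⟩
    · exfalso; linarith
    · exfalso; linarith
    · exfalso; linarith
  · subst hx
    refine ⟨fun h => ?_, fun h => ?_, fun h => ?_⟩
    · exfalso; nlinarith [mul_pos hy (neg_pos.mpr hz)]
    · exfalso; nlinarith [mul_pos hy (neg_pos.mpr hz)]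
    · rw [if_pos hy, if_neg (lt_asymm hy), if_neg (lt_asymm hz), if_pos hz]; norm_num
  · subst hx
    subst hz
    refine ⟨fun h => ?_, fun h => ?_, fun h => ?_⟩
    · exfalso; linarith
    · exfalso; linarith
    · exfalso; linarith
  · subst hx
    refine ⟨fun h => ?_, fun h => ?_, fun h => ?_⟩
    · exfalso; linarith
    · exfalso; linarith
    · exfalso; linarith
  · refine ⟨fun h => ?_, fun h => ?_, fun h => ?_⟩
    · exfalso; nlinarith [mul_pos (neg_pos.mpr hy) (neg_pos.mpr hz), mul_pos hx (neg_pos.mpr hy), mul_pos hx (neg_pos.mpr hz)]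
    · rw [if_pos hx, if_neg (lt_asymm hx), if_neg (lt_asymm hy), if_pos hy, if_neg (lt_asymm hz), if_pos hz]; norm_num
    · exfalso; nlinarith [mul_pos (neg_pos.mpr hy) (neg_pos.mpr hz), mul_pos hx (neg_pos.mpr hy), mul_pos hx (neg_pos.mpr hz)]
  · subst hz
    refine ⟨fun h => ?_, fun h => ?_, fun h => ?_⟩
    · exfalso; nlinarith [mul_pos hx (neg_pos.mpr hy)]
    · exfalso; nlinarith [mul_pos hx (neg_pos.mpr hy)]
    · rw [if_pos hx, if_neg (lt_asymm hx), if_neg (lt_asymm hy), if_pos hy]; norm_num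
  · refine ⟨fun h => ?_, fun h => ?_, fun h => ?_⟩
    · rw [if_pos hx, if_neg (lt_asymm hx), if_neg (lt_asymm hy), if_pos hy, if_pos hz, if_neg (lt_asymm hz)]; norm_num
    · exfalso; nlinarith [mul_pos hx hz, mul_pos hx (neg_pos.mpr hy), mul_pos hz (neg_pos.mpr hy)]
    · exfalso; nlinarith [mul_pos hx hz, mul_pos hx (neg_pos.mpr hy), mul_pos hz (neg_pos.mpr hy)]
  · subst hy
    refine ⟨fun h => ?_, fun h => ?_, fun h => ?_⟩
    · exfalso; nlinarith [mul_pos hx (neg_pos.mpr hz)]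
    · exfalso; nlinarith [mul_pos hx (neg_pos.mpr hz)]
    · rw [if_pos hx, if_neg (lt_asymm hx), if_neg (lt_asymm hz), if_pos hz]; norm_num
  · subst hy
    subst hz
    refine ⟨fun h => ?_, fun h => ?_, fun h => ?_⟩
    · exfalso; linarith
    · exfalso; linarith
    · exfalso; linarith
  · subst hy
    refine ⟨fun h => ?_, fun h => ?_, fun h => ?_⟩
    · exfalso; linarith
    · exfalso; linarith
    · exfalso; linarith
  · refine ⟨fun h => ?_, fun h => ?_, fun h => ?_⟩
    · rw [if_pos hx, if_neg (lt_asymm hx), if_pos hy, if_neg (lt_asymm hy), if_neg (lt_asymm hz), if_pos hz]; norm_num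
    · exfalso; nlinarith [mul_pos hx hy, mul_pos hx (neg_pos.mpr hz), mul_pos hy (neg_pos.mpr hz)]
    · exfalso; nlinarith [mul_pos hx hy, mul_pos hx (neg_pos.mpr hz), mul_pos hy (neg_pos.mpr hz)]
  · subst hz
    refine ⟨fun h => ?_, fun h => ?_, fun h => ?_⟩
    · exfalso; linarith
    · exfalso; linarith
    · exfalso; linarith
  · refine ⟨fun h => ?_, fun h => ?_, fun h => ?_⟩
    · exfalso; linarith
    · exfalso; linarith
    · exfalso; linarith

theorem signature_maslov_special (a b p q : ℝ) :
    (b * q * (a * q - b * p) < 0 →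
      matSignature (maslovMatrix (1, 0) (a, b) (p, q)) = 1) ∧
    (0 < b * q * (a * q - b * p) →
      matSignature (maslovMatrix (1, 0) (a, b) (p, q)) = -1) ∧
    (b * q * (a * q - b * p) = 0 →
      matSignature (maslovMatrix (1, 0) (a, b) (p, q)) = 0) := by
  set A := maslovMatrix (1, 0) (a, b) (p, q) with hA
  have hH : A.IsHermitian := by
    show Aᴴ = A
    ext i j
    fin_cases i <;> fin_cases j <;> simp [hA, maslovMatrix, omegaForm]
  set e := hH.eigenvalues with he
  have htr : e 0 + e 1 + e 2 = 0 := by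
    have := trace_eq_sum_eig hH
    rw [Fin.sum_univ_three] at this
    have h0 : A.trace = 0 := by
      simp [hA, maslovMatrix, Matrix.trace_fin_three]
    rw [← he] at this
    linarith
  have hdet : e 0 * e 1 * e 2 = 2 * (b * q * (a * q - b * p)) := by
    have := hH.det_eq_prod_eigenvalues
    rw [Fin.prod_univ_three] at this
    have h0 : A.det = 2 * (b * q * (a * q - b * p)) := by
      simp [hA, maslovMatrix, Matrix.det_fin_three, omegaForm]; ring
    rw [h0] at this
    simpa [he] using this.symm
  have hsig : matSignature A
      = ((if 0 < e 0 then (1:ℤ) else 0) + (if 0 < e 1 then 1 else 0) + (if 0 < e 2 then 1 else 0))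
        - ((if e 0 < 0 then (1:ℤ) else 0) + (if e 1 < 0 then 1 else 0)
            + (if e 2 < 0 then 1 else 0)) := by
    rw [matSignature, dif_pos hH, card_filter_fin3, card_filter_fin3]
  obtain ⟨k1, k2, k3⟩ := sig_aux (e 0) (e 1) (e 2) htr
  refine ⟨fun h => ?_, fun h => ?_, fun h => ?_⟩
  · rw [hsig]; exact k1 (by nlinarith)
  · rw [hsig]; exact k2 (by nlinarith)
  · rw [hsig]; exact k3 (by nlinarith)
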